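/- Let A, B be 2×2 real symmetric positive definite matrices with B⁻¹ ≤ A (in the Loewner order). Then there exists a 2×2 real symmetric positive definite matrix z with B⁻¹ ≤ z ≤ A; moreover for any such z, the 4×4 matrix (A ⊕ B) − (z ⊕ z⁻¹) is positive semidefinite, where A ⊕ B denotes block-diagonal sum. -/

import Mathlib

open Matrix

lemma posSemidef_fromBlocks_diag {n : Type*} [Fintype n] [DecidableEq n]
    {P Q : Matrix n n ℝ} (hP : P.PosSemidef) (hQ : Q.PosSemidef) :
    (Matrix.fromBlocks P 0 0 Q).PosSemidef := by
  rw [posSemidef_iff_dotProduct_mulVec]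
  constructor
  · unfold Matrix.IsHermitian
    rw [fromBlocks_conjTranspose, hP.1, hQ.1]
    simp
  · intro x
    rw [← Sum.elim_comp_inl_inr x, fromBlocks_mulVec, dotProduct_block]
    simp only [Sum.elim_inl, Sum.elim_inr, zero_mulVec, mulVec_zero, add_zero, zero_add]
    exact add_nonneg (hP.dotProduct_mulVec_nonneg _) (hQ.dotProduct_mulVec_nonneg _)

/-- if `z ≥ B⁻¹` with `z, B` positive definite, then `z⁻¹ ≤ B`. -/
lemma inv_le_of_le_inv {n : Type*} [Fintype n] [DecidableEq n]
    {B z : Matrix n n ℝ} (hB : B.PosDef) (hz : z.PosDef)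
    (h : (z - B⁻¹).PosSemidef) : (B - z⁻¹).PosSemidef := by
  haveI : Invertible B := hB.isUnit.invertible
  haveI : Invertible z := hz.isUnit.invertible
  have h1 : (fromBlocks B (1 : Matrix n n ℝ) (1 : Matrix n n ℝ)ᴴ z).PosSemidef := by
    rw [PosDef.fromBlocks₁₁ _ _ hB]
    simpa using h
  have h2 := (PosDef.fromBlocks₂₂ B (1 : Matrix n n ℝ) hz).mp (by simpa using h1)
  simpa using h2

/-- Loewner order: `X ≤ Y` is encoded as `(Y - X).PosSemidef`. If `B⁻¹ ≤ A`
then a symmetric positive definite `z` with `B⁻¹ ≤ z ≤ A` exists, and for any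
such `z` the matrix `(A ⊕ B) - (z ⊕ z⁻¹)` is positive semidefinite. -/
theorem exists_z_and_block_posSemidef
    (A B : Matrix (Fin 2) (Fin 2) ℝ)
    (hA : A.IsSymm) (hB : B.IsSymm) (hApd : A.PosDef) (hBpd : B.PosDef)
    (hle : (A - B⁻¹).PosSemidef) :
    (∃ z : Matrix (Fin 2) (Fin 2) ℝ, z.IsSymm ∧ z.PosDef ∧
        (z - B⁻¹).PosSemidef ∧ (A - z).PosSemidef) ∧
    (∀ z : Matrix (Fin 2) (Fin 2) ℝ, z.IsSymm → z.PosDef →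
        (z - B⁻¹).PosSemidef → (A - z).PosSemidef →
        (Matrix.fromBlocks A 0 0 B - Matrix.fromBlocks z 0 0 z⁻¹).PosSemidef) := by
  constructor
  · refine ⟨B⁻¹, ?_, hBpd.inv, by simpa using PosSemidef.zero, hle⟩
    rw [Matrix.IsSymm] at hB ⊢
    rw [Matrix.transpose_nonsing_inv, hB]
  · intro z hzs hzpd h1 h2
    have h3 : (B - z⁻¹).PosSemidef := inv_le_of_le_inv hBpd hzpd h1
    have : Matrix.fromBlocks A 0 0 B - Matrix.fromBlocks z 0 0 z⁻¹
        = Matrix.fromBlocks (A - z) 0 0 (B - z⁻¹) := by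
      ext (i|i) (j|j) <;> simp [Matrix.fromBlocks]
    rw [this]
    exact posSemidef_fromBlocks_diag h2 h3
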